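/- arXiv:2408.04569 — 4 statements merged into one kernel-verified Lean document; each statement's English description precedes it below -/
import Mathlib

section
/- Let p, q be nonzero polynomials in C[x_1,...,x_d] that are not proportional (there is no α in C with p = α·q). Then for a generic line ℓ(t) = a + t·b in C^d, the univariate polynomials t ↦ p(ℓ(t)) and t ↦ q(ℓ(t)) are not proportional. -/
open Polynomial

noncomputable section GenericLineAux

variable (d : ℕ)

/-- universal line substitution -/
noncomputable def glrLine (d : ℕ) :
    MvPolynomial (Fin d) ℂ →ₐ[ℂ] Polynomial (MvPolynomial (Fin d ⊕ Fin d) ℂ) :=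
  MvPolynomial.aeval (fun i => Polynomial.C (MvPolynomial.X (Sum.inl i)) +
      Polynomial.X * Polynomial.C (MvPolynomial.X (Sum.inr i)))

/-- a ↦ X, b ↦ Y - X -/
noncomputable def glrSigma (d : ℕ) :
    MvPolynomial (Fin d ⊕ Fin d) ℂ →ₐ[ℂ] MvPolynomial (Fin d ⊕ Fin d) ℂ :=
  MvPolynomial.aeval (Sum.elim (fun i => MvPolynomial.X (Sum.inl i))
    (fun i => MvPolynomial.X (Sum.inr i) - MvPolynomial.X (Sum.inl i)))

noncomputable def glrTheta (d : ℕ) (t : MvPolynomial (Fin d ⊕ Fin d) ℂ) :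
    Polynomial (MvPolynomial (Fin d ⊕ Fin d) ℂ) →ₐ[ℂ] MvPolynomial (Fin d ⊕ Fin d) ℂ :=
  Polynomial.eval₂AlgHom (glrSigma d) t (fun a => Commute.all _ _)

lemma glrTheta_zero (p : MvPolynomial (Fin d) ℂ) :
    glrTheta d 0 (glrLine d p) = MvPolynomial.rename Sum.inl p := by
  have h : (glrTheta d 0).comp (glrLine d) =
      (MvPolynomial.rename Sum.inl : MvPolynomial (Fin d) ℂ →ₐ[ℂ] _) := by
    apply MvPolynomial.algHom_ext
    intro i
    simp [glrTheta, glrLine, glrSigma]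
  exact DFunLike.congr_fun h p

lemma glrTheta_one (p : MvPolynomial (Fin d) ℂ) :
    glrTheta d 1 (glrLine d p) = MvPolynomial.rename Sum.inr p := by
  have h : (glrTheta d 1).comp (glrLine d) =
      (MvPolynomial.rename Sum.inr : MvPolynomial (Fin d) ℂ →ₐ[ℂ] _) := by
    apply MvPolynomial.algHom_ext
    intro i
    simp [glrTheta, glrLine, glrSigma]
  exact DFunLike.congr_fun h p

lemma glrMap (a b : Fin d → ℂ) (p : MvPolynomial (Fin d) ℂ) :
    Polynomial.map (MvPolynomial.aeval (Sum.elim a b) :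
        MvPolynomial (Fin d ⊕ Fin d) ℂ →ₐ[ℂ] ℂ) (glrLine d p) =
      MvPolynomial.aeval (fun i => Polynomial.C (a i) + Polynomial.X * Polynomial.C (b i)) p := by
  have h : (Polynomial.mapAlgHom (MvPolynomial.aeval (Sum.elim a b))).comp (glrLine d) =
      MvPolynomial.aeval (fun i => Polynomial.C (a i) + Polynomial.X * Polynomial.C (b i)) := by
    apply MvPolynomial.algHom_ext
    intro i
    simp [glrLine]
  have h2 := DFunLike.congr_fun h p
  simpa [Polynomial.coe_mapAlgHom] using h2

lemma glrConstEval (x : Fin d → ℂ) (p : MvPolynomial (Fin d) ℂ) :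
    MvPolynomial.aeval (fun i => (MvPolynomial.C (x i) : MvPolynomial (Fin d) ℂ)) p =
      MvPolynomial.C (MvPolynomial.eval x p) := by
  induction p using MvPolynomial.induction_on with
  | C c => simp
  | add f g hf hg => simp only [map_add, hf, hg]
  | mul_X f i hf =>
      simp only [map_mul, hf, MvPolynomial.aeval_X, MvPolynomial.eval_X, MvPolynomial.eval_mul]

end GenericLineAux

/-- For nonzero, non-proportional p, q ∈ ℂ[x_1,...,x_d], a generic line
ℓ(t) = a + t·b yields non-proportional univariate restrictions. "Generic" is expressed
by a nonzero polynomial condition on (a, b) ∈ ℂ^d × ℂ^d. -/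
theorem generic_line_restriction_nonproportional
    (d : ℕ) (p q : MvPolynomial (Fin d) ℂ)
    (hp : p ≠ 0) (hq : q ≠ 0)
    (hpq : ∀ α : ℂ, p ≠ α • q) :
    ∃ g : MvPolynomial (Fin d ⊕ Fin d) ℂ, g ≠ 0 ∧
      ∀ a b : Fin d → ℂ,
        MvPolynomial.eval (Sum.elim a b) g ≠ 0 →
        ∀ α : ℂ,
          MvPolynomial.aeval (fun i => Polynomial.C (a i) + Polynomial.X * Polynomial.C (b i)) p ≠
            α • MvPolynomial.aeval (fun i => Polynomial.C (a i) + Polynomial.X * Polynomial.C (b i)) q := by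
  classical
  set P := glrLine d p with hP
  set Q := glrLine d q with hQ
  by_cases H : ∀ j k, P.coeff j * Q.coeff k = P.coeff k * Q.coeff j
  · exfalso
    -- swap identity
    have hswap : P.coeff 0 * Q.eval 1 = P.eval 1 * Q.coeff 0 := by
      set N := max P.natDegree Q.natDegree + 1 with hN
      have hPN : P.natDegree < N := Nat.lt_succ_of_le (le_max_left _ _)
      have hQN : Q.natDegree < N := Nat.lt_succ_of_le (le_max_right _ _)
      rw [Polynomial.eval_eq_sum_range' hPN, Polynomial.eval_eq_sum_range' hQN]
      simp only [one_pow, mul_one]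
      rw [Finset.mul_sum, Finset.sum_mul]
      exact Finset.sum_congr rfl (fun k _ => H 0 k)
    have key : MvPolynomial.rename Sum.inl p * MvPolynomial.rename Sum.inr q =
        MvPolynomial.rename Sum.inr p * MvPolynomial.rename Sum.inl q := by
      have e0p := glrTheta_zero d p
      have e0q := glrTheta_zero d q
      have e1p := glrTheta_one d p
      have e1q := glrTheta_one d q
      have c0 : ∀ r : Polynomial (MvPolynomial (Fin d ⊕ Fin d) ℂ),
          glrTheta d 0 r = glrSigma d (r.coeff 0) := fun r =>
        Polynomial.eval₂_at_zero _
      have c1 : ∀ r : Polynomial (MvPolynomial (Fin d ⊕ Fin d) ℂ),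
          glrTheta d 1 r = glrSigma d (r.eval 1) := fun r =>
        Polynomial.eval₂_at_one _
      calc MvPolynomial.rename Sum.inl p * MvPolynomial.rename Sum.inr q
          = glrTheta d 0 P * glrTheta d 1 Q := by rw [e0p, e1q]
        _ = glrSigma d (P.coeff 0 * Q.eval 1) := by rw [c0, c1, map_mul]
        _ = glrSigma d (P.eval 1 * Q.coeff 0) := by rw [hswap]
        _ = glrTheta d 1 P * glrTheta d 0 Q := by rw [c0, c1, map_mul]
        _ = _ := by rw [e1p, e0q]
    -- pick a point where q doesn't vanish
    have hx : ∃ x : Fin d → ℂ, MvPolynomial.eval x q ≠ 0 := by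
      by_contra h
      push_neg at h
      exact hq (MvPolynomial.funext (fun x => by simp [h x]))
    obtain ⟨x₀, hx₀⟩ := hx
    -- apply the partial evaluation
    set E : MvPolynomial (Fin d ⊕ Fin d) ℂ →ₐ[ℂ] MvPolynomial (Fin d) ℂ :=
      MvPolynomial.aeval (Sum.elim (fun i => MvPolynomial.C (x₀ i)) MvPolynomial.X) with hE
    have hEl : ∀ r : MvPolynomial (Fin d) ℂ,
        E (MvPolynomial.rename Sum.inl r) = MvPolynomial.C (MvPolynomial.eval x₀ r) := by
      intro r
      rw [hE, MvPolynomial.aeval_rename]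
      exact glrConstEval d x₀ r
    have hEr : ∀ r : MvPolynomial (Fin d) ℂ,
        E (MvPolynomial.rename Sum.inr r) = r := by
      intro r
      rw [hE, MvPolynomial.aeval_rename]
      simp [Function.comp]
    have key2 : MvPolynomial.C (MvPolynomial.eval x₀ p) * q =
        p * MvPolynomial.C (MvPolynomial.eval x₀ q) := by
      have h3 := congrArg E key
      rw [map_mul, map_mul, hEl, hEl, hEr, hEr] at h3
      exact h3
    apply hpq (MvPolynomial.eval x₀ p / MvPolynomial.eval x₀ q)
    rw [MvPolynomial.smul_eq_C_mul, div_eq_mul_inv, map_mul]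
    calc p = p * (MvPolynomial.C (MvPolynomial.eval x₀ q) *
            MvPolynomial.C (MvPolynomial.eval x₀ q)⁻¹) := by
          rw [← map_mul, mul_inv_cancel₀ hx₀]; simp
      _ = MvPolynomial.C (MvPolynomial.eval x₀ p) * q *
            MvPolynomial.C (MvPolynomial.eval x₀ q)⁻¹ := by rw [← mul_assoc, ← key2]
      _ = MvPolynomial.C (MvPolynomial.eval x₀ p) *
            MvPolynomial.C (MvPolynomial.eval x₀ q)⁻¹ * q := by ring
  · push_neg at H
    obtain ⟨j, k, hjk⟩ := H
    refine ⟨P.coeff j * Q.coeff k - P.coeff k * Q.coeff j, sub_ne_zero.mpr hjk, ?_⟩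
    intro a b hg α heq
    apply hg
    set ev : MvPolynomial (Fin d ⊕ Fin d) ℂ →ₐ[ℂ] ℂ :=
      MvPolynomial.aeval (Sum.elim a b) with hev
    have hcoe : ∀ r : MvPolynomial (Fin d ⊕ Fin d) ℂ,
        MvPolynomial.eval (Sum.elim a b) r = ev r := by
      intro r
      rw [hev]
      rw [← MvPolynomial.coe_aeval_eq_eval]
      rfl
    have h2 : Polynomial.map (ev : MvPolynomial (Fin d ⊕ Fin d) ℂ →+* ℂ) P =
        α • Polynomial.map (ev : MvPolynomial (Fin d ⊕ Fin d) ℂ →+* ℂ) Q := by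
      rw [hP, hQ, hev, glrMap, glrMap]
      exact heq
    have hc : ∀ n : ℕ, ev (P.coeff n) = α * ev (Q.coeff n) := by
      intro n
      have h4 := congrArg (fun r : Polynomial ℂ => r.coeff n) h2
      simpa [Polynomial.coeff_map, Polynomial.coeff_smul, smul_eq_mul] using h4
    rw [hcoe, map_sub, map_mul, map_mul, hc j, hc k]
    ring
end

section
/- Let d ≥ 1, r ≥ 2, and suppose a linear combination c_1·x_1^{r·m} + ... + c_d·x_d^{r·m} (with m ≥ 1, c_i ∈ C) is equal to p^r for some polynomial p ∈ C[x_1,...,x_d]. Then at most one c_i is nonzero; that is, p^r is a scalar multiple of some monomial x_j^{r·m} and p is a scalar multiple of x_j^m. -/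
open MvPolynomial in
lemma aux_mv_isUnit_eq_C : ∀ {n : ℕ} (u : MvPolynomial (Fin n) ℂ), IsUnit u →
    ∃ l : ℂ, u = MvPolynomial.C l := by
  intro n
  induction n with
  | zero => exact fun u _ => ⟨constantCoeff u, (eq_C_of_isEmpty u)⟩
  | succ n ih =>
    intro u hu
    obtain ⟨r, hr, hCr⟩ := Polynomial.isUnit_iff.mp (hu.map (MvPolynomial.finSuccEquiv ℂ n))
    obtain ⟨l, rfl⟩ := ih r hr
    refine ⟨l, (MvPolynomial.finSuccEquiv ℂ n).injective ?_⟩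
    rw [← hCr]
    have h2 := RingHom.congr_fun (MvPolynomial.finSuccEquiv_comp_C_eq_C (R := ℂ) n) l
    simp only [RingHom.coe_comp, Function.comp_apply, RingHom.coe_coe] at h2
    rw [← h2, AlgEquiv.apply_symm_apply]

open MvPolynomial in
lemma aux_prime_X {d : ℕ} (i : Fin d) : Prime (MvPolynomial.X i : MvPolynomial (Fin d) ℂ) := by
  let e := (renameEquiv ℂ (Equiv.optionSubtypeNe i)).symm.trans
    (optionEquivLeft ℂ {b : Fin d // b ≠ i})
  rw [← MulEquiv.prime_iff e.toMulEquiv]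
  have : e (X i) = Polynomial.X := by
    show optionEquivLeft ℂ _ ((renameEquiv ℂ (Equiv.optionSubtypeNe i)).symm (X i)) = _
    rw [renameEquiv_symm, renameEquiv_apply, rename_X, Equiv.optionSubtypeNe_symm_self,
      optionEquivLeft_X_none]
  rw [show e.toMulEquiv (X i) = e (X i) from rfl, this]
  exact Polynomial.prime_X

lemma aux_not_pow (a b : ℂ) (ha : a ≠ 0) (hb : b ≠ 0) (n r : ℕ) (hn : 2 ≤ n) (hr : 2 ≤ r)
    (q : Polynomial ℂ) (h : Polynomial.C a * Polynomial.X ^ n + Polynomial.C b = q ^ r) :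
    False := by
  set g : Polynomial ℂ := Polynomial.X ^ n - Polynomial.C (-(b/a)) with hg
  have hsep : g.Separable := by
    refine Polynomial.separable_X_pow_sub_C _ ?_ ?_
    · exact_mod_cast Nat.cast_ne_zero.mpr (by omega)
    · simp [div_eq_zero_iff, ha, hb]
  have hsq : Squarefree g := hsep.squarefree
  have hfg : Polynomial.C a * g = Polynomial.C a * Polynomial.X ^ n + Polynomial.C b := by
    rw [hg, mul_sub, ← Polynomial.C_mul]
    have : a * (-(b/a)) = -b := by field_simp
    rw [this, map_neg, sub_neg_eq_add]
  have hq0 : q ≠ 0 := by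
    intro h0
    rw [h0, zero_pow (by omega : r ≠ 0)] at h
    have := congrArg (Polynomial.eval 0) h
    simp [zero_pow (by omega : n ≠ 0)] at this
    exact hb this
  have hqu : ¬ IsUnit q := by
    intro hu
    obtain ⟨u, _, rfl⟩ := Polynomial.isUnit_iff.mp hu
    rw [← Polynomial.C_pow] at h
    have := congrArg (fun f => Polynomial.coeff f n) h
    simp only [Polynomial.coeff_add, Polynomial.coeff_C_mul, Polynomial.coeff_X_pow,
      Polynomial.coeff_C, if_pos rfl, if_neg (by omega : ¬ n = 0), mul_one, add_zero] at this
    norm_num at this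
    exact ha this
  obtain ⟨π, hπ, hπq⟩ := WfDvdMonoid.exists_irreducible_factor hqu hq0
  have hd2 : π * π ∣ q ^ r := by
    calc π * π ∣ q * q := mul_dvd_mul hπq hπq
    _ = q ^ 2 := (sq q).symm
    _ ∣ q ^ r := pow_dvd_pow q hr
  rw [← h, ← hfg] at hd2
  rw [(Polynomial.isUnit_C.mpr ha.isUnit).dvd_mul_left] at hd2
  exact hπ.not_isUnit (hsq π hd2)

open MvPolynomial

/-- For d ≥ 1, r ≥ 2, m ≥ 1, if c_1 x_1^{rm} + ... + c_d x_d^{rm} = p^r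
for some polynomial p, then at most one c_i is nonzero: p^r is a scalar multiple of
some x_j^{rm} and p is a scalar multiple of x_j^m. -/
theorem pure_power_combination_rth_power
    (d r m : ℕ) (hd : 1 ≤ d) (hr : 2 ≤ r) (hm : 1 ≤ m)
    (c : Fin d → ℂ) (p : MvPolynomial (Fin d) ℂ)
    (h : (∑ i, MvPolynomial.C (c i) * (MvPolynomial.X i) ^ (r * m)) = p ^ r) :
    ∃ j : Fin d, (∀ i, i ≠ j → c i = 0) ∧
      ∃ l : ℂ, p = MvPolynomial.C l * (MvPolynomial.X j) ^ m := by
  classical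
  have hrm : r * m ≠ 0 := by positivity
  by_cases hcase : ∃ i j : Fin d, i ≠ j ∧ c i ≠ 0 ∧ c j ≠ 0
  · exfalso
    obtain ⟨i, j, hij, hci, hcj⟩ := hcase
    have hψ := congrArg (MvPolynomial.eval₂Hom (Polynomial.C : ℂ →+* Polynomial ℂ) (fun k =>
        if k = i then Polynomial.X else if k = j then 1 else 0)) h
    rw [map_sum, map_pow] at hψ
    simp only [map_mul, map_pow, eval₂Hom_C, eval₂Hom_X'] at hψ
    have hsum : (∑ k : Fin d, Polynomial.C (c k) *
        (if k = i then Polynomial.X else if k = j then (1 : Polynomial ℂ) else 0) ^ (r * m))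
        = Polynomial.C (c i) * Polynomial.X ^ (r * m) + Polynomial.C (c j) := by
      rw [← Finset.sum_subset (Finset.subset_univ ({i, j} : Finset (Fin d)))
        (fun k _ hk => by
          simp only [Finset.mem_insert, Finset.mem_singleton, not_or] at hk
          rw [if_neg hk.1, if_neg hk.2, zero_pow hrm, mul_zero])]
      rw [Finset.sum_pair hij]
      simp [hij, Ne.symm hij]
    rw [hsum] at hψ
    exact aux_not_pow (c i) (c j) hci hcj (r * m) r (by nlinarith) hr _ hψ
  · by_cases hall : ∀ i, c i = 0
    · have hp0 : p = 0 := by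
        have : p ^ r = 0 := by rw [← h]; simp [hall]
        exact pow_eq_zero_iff (by omega : r ≠ 0) |>.mp this
      exact ⟨⟨0, hd⟩, fun i _ => hall i, 0, by simp [hp0]⟩
    · push_neg at hall
      obtain ⟨j, hj⟩ := hall
      have hzero : ∀ i, i ≠ j → c i = 0 := by
        intro i hi
        by_contra hci
        exact hcase ⟨i, j, hi, hci, hj⟩
      have hsum : (∑ i, MvPolynomial.C (c i) * (MvPolynomial.X i : MvPolynomial (Fin d) ℂ) ^ (r * m))
          = MvPolynomial.C (c j) * (MvPolynomial.X j) ^ (r * m) :=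
        Finset.sum_eq_single j (fun i _ hi => by rw [hzero i hi]; simp) (by simp)
      rw [hsum] at h
      have hpd : p ∣ (MvPolynomial.X j : MvPolynomial (Fin d) ℂ) ^ (r * m) := by
        have h1 : p ∣ p ^ r := dvd_pow_self p (by omega)
        have hCu : IsUnit (MvPolynomial.C (c j) : MvPolynomial (Fin d) ℂ) :=
          hj.isUnit.map MvPolynomial.C
        rw [← h, hCu.dvd_mul_left] at h1
        exact h1
      obtain ⟨k, hk, hassoc⟩ := (dvd_prime_pow (aux_prime_X j) (r * m)).mp hpd
      obtain ⟨u, hu⟩ := hassoc.symm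
      obtain ⟨l, hl⟩ := aux_mv_isUnit_eq_C (u : MvPolynomial (Fin d) ℂ) u.isUnit
      have hp : p = MvPolynomial.C l * (MvPolynomial.X j) ^ k := by
        rw [← hu, hl]; ring
      have hmono : (MvPolynomial.monomial (Finsupp.single j (r * m))) (c j)
          = (MvPolynomial.monomial (Finsupp.single j (k * r))) (l ^ r) := by
        rw [← MvPolynomial.C_mul_X_pow_eq_monomial, ← MvPolynomial.C_mul_X_pow_eq_monomial,
          h, hp]
        rw [mul_pow, ← MvPolynomial.C_pow, ← pow_mul]
      have hcoeff := congrArg (MvPolynomial.coeff (Finsupp.single j (r * m))) hmono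
      rw [MvPolynomial.coeff_monomial, MvPolynomial.coeff_monomial, if_pos rfl] at hcoeff
      by_cases hsing : Finsupp.single j (k * r) = Finsupp.single j (r * m)
      · have hkr : k * r = r * m := by
          have := DFunLike.congr_fun hsing j
          simpa using this
        have hkm : k = m := by
          rw [mul_comm r m] at hkr
          exact Nat.eq_of_mul_eq_mul_right (by omega) hkr
        exact ⟨j, hzero, l, by rw [hp, hkm]⟩
      · rw [if_neg hsing] at hcoeff
        exact absurd hcoeff hj
end

section
/- Let d = (d_0, ..., d_L) be an equi-width architecture with d := d_0 = ... = d_L ≥ 2, L ≥ 2, and r ≥ 2. If weight matrices W_1,...,W_L ∈ C^{d×d} satisfy (W_L σ_{L−1} ⋯ σ_1 W_1)(x) = (x_1^{r^{L−1}}, ..., x_d^{r^{L−1}}), then every W_i is a scaled permutation matrix (a product of a permutation matrix and an invertible diagonal matrix). -/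
/-- Polynomial neural network with activation degree r, architecture `d 0, ..., d L`. -/
def pnn {R : Type*} [CommSemiring R] (r : ℕ) (d : ℕ → ℕ)
    (W : ∀ i : ℕ, Matrix (Fin (d (i+1))) (Fin (d i)) R) :
    (L : ℕ) → ((Fin (d 0) → R) → (Fin (d L) → R))
  | 0 => fun x => x
  | 1 => fun x => (W 0).mulVec x
  | (L+2) => fun x => (W (L+1)).mulVec (fun i => (pnn r d W (L+1) x) i ^ r)

variable {d : ℕ}

def SP (W : Matrix (Fin d) (Fin d) ℂ) : Prop :=
  ∃ (π : Equiv.Perm (Fin d)) (e : Fin d → ℂ), (∀ j, e j ≠ 0) ∧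
    W = Equiv.Perm.permMatrix ℂ π * Matrix.diagonal e

lemma sp_entry (π : Equiv.Perm (Fin d)) (e : Fin d → ℂ) (i j : Fin d) :
    (Equiv.Perm.permMatrix ℂ π * Matrix.diagonal e) i j = if π i = j then e j else 0 := by
  rw [Matrix.mul_diagonal]
  simp [Equiv.Perm.permMatrix, PEquiv.toMatrix, Equiv.toPEquiv, eq_comm]

lemma sp_of (W : Matrix (Fin d) (Fin d) ℂ) (ρ : Equiv.Perm (Fin d))
    (h0 : ∀ j, W (ρ j) j ≠ 0) (h : ∀ i j, i ≠ ρ j → W i j = 0) : SP W := by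
  refine ⟨ρ.symm, fun j => W (ρ j) j, h0, ?_⟩
  ext i j
  rw [sp_entry]
  rcases eq_or_ne i (ρ j) with rfl | hne
  · simp
  · rw [h i j hne, if_neg]
    intro hc
    exact hne (by simpa using congrArg ρ hc)

lemma sp_char {W : Matrix (Fin d) (Fin d) ℂ} (hW : SP W) :
    ∃ ρ : Equiv.Perm (Fin d), (∀ j, W (ρ j) j ≠ 0) ∧ ∀ i j, i ≠ ρ j → W i j = 0 := by
  obtain ⟨π, e, he, rfl⟩ := hW
  refine ⟨π.symm, fun j => ?_, fun i j hij => ?_⟩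
  · rw [sp_entry, if_pos (π.apply_symm_apply j)]; exact he j
  · rw [sp_entry, if_neg]
    intro hc
    exact hij (by simp [← hc])

lemma sp_mul {A B : Matrix (Fin d) (Fin d) ℂ} (hA : SP A) (hB : SP B) : SP (A * B) := by
  obtain ⟨ρA, hA0, hAz⟩ := sp_char hA
  obtain ⟨ρB, hB0, hBz⟩ := sp_char hB
  refine sp_of _ (ρB.trans ρA) (fun j => ?_) (fun i l hil => ?_)
  · rw [Matrix.mul_apply, Finset.sum_eq_single (ρB j)]
    · exact mul_ne_zero (hA0 _) (hB0 _)
    · intro b _ hb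
      rw [hBz b j hb, mul_zero]
    · simp
  · rw [Matrix.mul_apply]
    apply Finset.sum_eq_zero
    intro b _
    rcases eq_or_ne b (ρB l) with rfl | hb
    · rw [hAz i (ρB l) hil, zero_mul]
    · rw [hBz b l hb, mul_zero]

lemma sp_inv {A : Matrix (Fin d) (Fin d) ℂ} (hA : SP A) :
    ∃ B, SP B ∧ A * B = 1 := by
  obtain ⟨ρ, h0, hz⟩ := sp_char hA
  refine ⟨Matrix.of (fun i j => if ρ i = j then (A (ρ i) i)⁻¹ else 0), ?_, ?_⟩
  · refine sp_of _ ρ.symm (fun j => ?_) (fun i j hij => ?_)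
    · simp only [Matrix.of_apply, if_pos (ρ.apply_symm_apply j)]
      exact inv_ne_zero (h0 _)
    · have : ρ i ≠ j := fun hc => hij (by rw [← hc]; simp)
      simp only [Matrix.of_apply, if_neg this]
  · ext i l
    rw [Matrix.mul_apply, Finset.sum_eq_single (ρ.symm l)]
    · simp only [Matrix.of_apply, if_pos (ρ.apply_symm_apply l)]
      rcases eq_or_ne i l with rfl | hil
      · rw [show ρ (ρ.symm i) = i from ρ.apply_symm_apply i,
          mul_inv_cancel₀ (by simpa using h0 (ρ.symm i)), Matrix.one_apply_eq]
      · rw [hz i (ρ.symm l) (by simpa using hil), zero_mul, Matrix.one_apply_ne hil]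
    · intro b _ hb
      have : ρ b ≠ l := fun hc => hb (by simp [← hc])
      simp only [Matrix.of_apply, if_neg this, mul_zero]
    · simp

lemma sp_mulVec (π : Equiv.Perm (Fin d)) (e : Fin d → ℂ) (x : Fin d → ℂ) (i : Fin d) :
    (Equiv.Perm.permMatrix ℂ π * Matrix.diagonal e).mulVec x i = e (π i) * x (π i) := by
  simp only [Matrix.mulVec, dotProduct, sp_entry]
  rw [Finset.sum_eq_single (π i)]
  · simp
  · intro b _ hb
    rw [if_neg (fun h => hb h.symm), zero_mul]
  · simp

lemma pnn_shift (r : ℕ) (W : ℕ → Matrix (Fin d) (Fin d) ℂ) :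
    ∀ (M : ℕ) (x : Fin d → ℂ), pnn (R := ℂ) r (fun _ => d) W (M+2) x
      = pnn (R := ℂ) r (fun _ => d) (fun i => W (i+1)) (M+1)
          (fun j => ((W 0).mulVec x) j ^ r) := by
  intro M
  induction M with
  | zero => intro x; rfl
  | succ M ih =>
    intro x
    conv_lhs => rw [pnn]
    conv_rhs => rw [pnn]
    exact congrArg _ (funext fun i => congrArg (· ^ r) (congrFun (ih x) i))

lemma pnn_first (r : ℕ) (W : ℕ → Matrix (Fin d) (Fin d) ℂ) (B : Matrix (Fin d) (Fin d) ℂ) :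
    ∀ (M : ℕ) (x : Fin d → ℂ), pnn (R := ℂ) r (fun _ => d) W (M+1) (B.mulVec x)
      = pnn (R := ℂ) r (fun _ => d) (fun i => if i = 0 then W 0 * B else W i) (M+1) x := by
  intro M
  induction M with
  | zero => intro x; simp [pnn, Matrix.mulVec_mulVec]
  | succ M ih =>
    intro x
    conv_lhs => rw [pnn]
    conv_rhs => rw [pnn]
    beta_reduce
    rw [if_neg (by omega : ¬ (M + 1 = 0))]
    exact congrArg _ (funext fun i => congrArg (· ^ r) (congrFun (ih x) i))

lemma main (r : ℕ) (hr : 2 ≤ r) :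
    ∀ L, 1 ≤ L → ∀ W : ℕ → Matrix (Fin d) (Fin d) ℂ,
      (∀ x, pnn (R := ℂ) r (fun _ => d) W L x = fun i => x i ^ r ^ (L - 1)) →
      ∀ i, i < L → SP (W i) := by
  refine Nat.le_induction ?_ ?_
  · -- base case L = 1
    intro W h i hi
    have hi0 : i = 0 := by omega
    subst hi0
    have hW : W 0 = 1 := by
      ext a b
      have h1 := congrFun (h (Pi.single b 1)) a
      simp only [pnn, Matrix.mulVec_single, mul_one, MulOpposite.op_one, one_smul, Matrix.col_apply] at h1
      rw [h1]
      rcases eq_or_ne a b with rfl | hab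
      · simp [Matrix.one_apply_eq]
      · simp [Pi.single_eq_of_ne hab, Matrix.one_apply_ne hab]
    rw [hW]
    refine sp_of _ (Equiv.refl _) (fun j => ?_) (fun i j hij => ?_)
    · simp [Matrix.one_apply]
    · exact Matrix.one_apply_ne hij
  · -- inductive step
    intro L hL1 IH W h
    obtain ⟨k, rfl⟩ : ∃ k, L = k + 1 := ⟨L - 1, by omega⟩
    have H : ∀ x : Fin d → ℂ, pnn (R := ℂ) r (fun _ => d) W (k + 2) x
        = fun i => x i ^ r ^ (k + 1) := by
      intro x
      simpa using h x
    set W' : ℕ → Matrix (Fin d) (Fin d) ℂ := fun i => W (i + 1) with hW'def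
    have Hs : ∀ x : Fin d → ℂ,
        pnn (R := ℂ) r (fun _ => d) W' (k + 1) (fun j => ((W 0).mulVec x) j ^ r)
          = fun i => x i ^ r ^ (k + 1) :=
      fun x => (pnn_shift r W k x).symm.trans (H x)
    have hN : r ^ (k + 1) ≠ 0 := pow_ne_zero _ (by omega)
    -- kernel of W 0 is trivial
    have hker : ∀ v : Fin d → ℂ, (W 0).mulVec v = 0 → v = 0 := by
      intro v hv
      have h1 := Hs v
      have h2 := Hs 0
      rw [hv] at h1
      rw [Matrix.mulVec_zero] at h2
      funext i
      have h3 := congrFun (h1.symm.trans h2) i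
      simpa [zero_pow hN, pow_eq_zero_iff hN] using h3
    have hinj : Function.Injective ((W 0).mulVec) := by
      intro u v huv
      have : (W 0).mulVec (u - v) = 0 := by rw [Matrix.mulVec_sub, huv, sub_self]
      exact sub_eq_zero.mp (hker _ this)
    have hsurj : Function.Surjective ((W 0).mulVec) := by
      have := (LinearMap.injective_iff_surjective (f := (W 0).mulVecLin)).mp
      simp only [Matrix.coe_mulVecLin] at this
      exact this hinj
    -- primitive root of unity
    have hprim := Complex.isPrimitiveRoot_exp r (by omega)
    set ζ : ℂ := Complex.exp (2 * Real.pi * Complex.I / r) with hζdef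
    have hζr : ζ ^ r = 1 := hprim.pow_eq_one
    have hζ1 : ζ ≠ 1 := hprim.ne_one (by omega)
    have col : ∀ (j m : Fin d), (W 0).mulVec (Pi.single j 1) m = W 0 m j := by
      intro j m
      simp [Matrix.mulVec_single]
    -- each column has at most one nonzero entry
    have hsupp : ∀ (j i i' : Fin d), W 0 i j ≠ 0 → W 0 i' j ≠ 0 → i = i' := by
      intro j i i' hi hi'
      by_contra hne
      set ω : Fin d → ℂ := Function.update (fun _ => (1 : ℂ)) i ζ with hωdef
      have hωr : ∀ m, ω m ^ r = 1 := by
        intro m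
        rcases eq_or_ne m i with rfl | hm
        · simp [hωdef, hζr]
        · simp [hωdef, Function.update_of_ne hm]
      obtain ⟨a, ha⟩ := hsurj (fun m => ω m * (W 0).mulVec (Pi.single j 1) m)
      have harg : (fun l => ((W 0).mulVec a) l ^ r)
          = fun l => ((W 0).mulVec (Pi.single j (1 : ℂ))) l ^ r := by
        funext l
        simp only [ha]
        rw [mul_pow, hωr, one_mul]
      have hpow : ∀ m, a m ^ r ^ (k + 1) = (Pi.single j (1 : ℂ) : Fin d → ℂ) m ^ r ^ (k + 1) :=
        fun m => congrFun ((Hs a).symm.trans ((congrArg _ harg).trans (Hs (Pi.single j 1)))) m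
      have haz : ∀ m, m ≠ j → a m = 0 := by
        intro m hm
        have := hpow m
        rw [Pi.single_eq_of_ne hm, zero_pow hN, pow_eq_zero_iff hN] at this
        exact this
      have hma : ∀ m, (W 0).mulVec a m = W 0 m j * a j := by
        intro m
        simp only [Matrix.mulVec, dotProduct]
        rw [Finset.sum_eq_single j]
        · intro b _ hb
          rw [haz b hb, mul_zero]
        · simp
      have heq : ∀ m, W 0 m j * a j = ω m * W 0 m j := by
        intro m
        have h4 := congrFun ha m
        rw [hma m, col j m] at h4
        exact h4
      have hai : a j = ζ := by
        have h5 := heq i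
        rw [hωdef, Function.update_self, mul_comm ζ] at h5
        exact mul_left_cancel₀ hi h5
      have hai' : a j = 1 := by
        have h5 := heq i'
        rw [hωdef, Function.update_of_ne (Ne.symm hne), one_mul] at h5
        exact mul_left_cancel₀ hi' (h5.trans (mul_one _).symm)
      exact hζ1 (hai ▸ hai')
    have hcolnz : ∀ j : Fin d, ∃ i, W 0 i j ≠ 0 := by
      intro j
      by_contra hc
      push_neg at hc
      have hz0 : (W 0).mulVec (Pi.single j (1 : ℂ)) = 0 := by
        funext m
        rw [col j m, hc m, Pi.zero_apply]
      have := congrFun (hker _ hz0) j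
      simp at this
    choose ρ hρ using hcolnz
    have hz : ∀ i j, i ≠ ρ j → W 0 i j = 0 := fun i j hij =>
      by_contra fun hW => hij (hsupp j i (ρ j) hW (hρ j))
    have hρinj : Function.Injective ρ := by
      intro j j' hjj
      by_contra hne
      set v : Fin d → ℂ := W 0 (ρ j) j' • (Pi.single j (1 : ℂ) : Fin d → ℂ)
        - W 0 (ρ j) j • (Pi.single j' (1 : ℂ) : Fin d → ℂ) with hvdef
      have hvz : (W 0).mulVec v = 0 := by
        funext m
        rw [hvdef, Matrix.mulVec_sub, Matrix.mulVec_smul, Matrix.mulVec_smul]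
        simp only [Pi.sub_apply, Pi.smul_apply, smul_eq_mul, col, Pi.zero_apply,
          Matrix.mulVec_single, mul_one, MulOpposite.op_one, one_smul, Matrix.col_apply]
        rcases eq_or_ne m (ρ j) with rfl | hm
        · ring
        · rw [hz m j hm, hz m j' (fun hc => hm (hc.trans hjj.symm)), mul_zero, mul_zero,
            sub_zero]
      have hv0 := congrFun (hker v hvz) j
      simp only [hvdef, Pi.sub_apply, Pi.smul_apply, smul_eq_mul, Pi.single_eq_same, mul_one,
        Pi.zero_apply] at hv0
      rw [Pi.single_eq_of_ne hne, mul_zero, sub_zero] at hv0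
      exact hρ j' (hjj ▸ hv0)
    have hρbij := Finite.injective_iff_bijective.mp hρinj
    have hSP0 : SP (W 0) :=
      sp_of _ (Equiv.ofBijective ρ hρbij) (fun j => hρ j) (fun i j hij => hz i j hij)
    obtain ⟨π, e, he, hW0⟩ := hSP0
    set M' : Matrix (Fin d) (Fin d) ℂ :=
      Equiv.Perm.permMatrix ℂ π * Matrix.diagonal (fun j => e j ^ r) with hM'def
    have hM' : SP M' := ⟨π, _, fun j => pow_ne_zero r (he j), hM'def⟩
    have key2 : ∀ y : Fin d → ℂ,
        pnn (R := ℂ) r (fun _ => d) W' (k + 1) (M'.mulVec y) = fun i => y i ^ r ^ k := by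
      intro y
      have hroot : ∀ i : Fin d, ∃ z : ℂ, z ^ r = y i :=
        fun i => IsAlgClosed.exists_pow_nat_eq (y i) (by omega)
      choose x hx using hroot
      have harg : (fun j => ((W 0).mulVec x) j ^ r) = M'.mulVec y := by
        funext l
        rw [hW0, sp_mulVec, mul_pow, hx, hM'def, sp_mulVec]
      rw [← harg, Hs x]
      funext i
      rw [← hx i, ← pow_mul, pow_succ']
    have hpnn'' : ∀ x : Fin d → ℂ,
        pnn (R := ℂ) r (fun _ => d) (fun i => if i = 0 then W' 0 * M' else W' i) (k + 1) x
          = fun i => x i ^ r ^ k :=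
      fun x => (pnn_first r W' M' k x).symm.trans (key2 x)
    have hIH := IH (fun i => if i = 0 then W' 0 * M' else W' i)
      (fun x => by simpa using hpnn'' x)
    intro i hi
    rcases i with _ | i
    · exact ⟨π, e, he, hW0⟩
    rcases i with _ | m
    · obtain ⟨B, hB, hMB⟩ := sp_inv hM'
      have h0 : SP ((fun i => if i = 0 then W' 0 * M' else W' i) 0 * B) :=
        sp_mul (hIH 0 (by omega)) hB
      simp only [reduceIte] at h0
      rw [mul_assoc, hMB, mul_one] at h0
      exact h0
    · have h2 := hIH (m + 1) (by omega)
      have hne0 : (fun i => if i = 0 then W' 0 * M' else W' i) (m + 1) = W' (m + 1) := by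
        simp
      rw [show (if m + 1 = 0 then W' 0 * M' else W' (m + 1)) = W' (m + 1) from hne0] at h2
      exact h2


/-- For an equi-width architecture with d ≥ 2, L ≥ 2, r ≥ 2, if the
network computed by W_1,...,W_L equals x ↦ (x_1^{r^{L−1}},...,x_d^{r^{L−1}}), then
every W_i is a scaled permutation matrix. -/
theorem fiber_weights_are_scaled_permutations
    (d L r : ℕ) (hd : 2 ≤ d) (hL : 2 ≤ L) (hr : 2 ≤ r)
    (W : ℕ → Matrix (Fin d) (Fin d) ℂ)
    (hnet : ∀ x : Fin d → ℂ,
        pnn (R := ℂ) r (fun _ => d) W L x = fun i => (x i) ^ (r ^ (L - 1))) :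
    ∀ i, i < L →
      ∃ (π : Equiv.Perm (Fin d)) (e : Fin d → ℂ), (∀ j, e j ≠ 0) ∧
        W i = Equiv.Perm.permMatrix ℂ π * Matrix.diagonal e := by
  intro i hi
  exact main r hr L (by omega) W hnet i hi
end

section
/- For an equi-width architecture d = (d,...,d) with L layers, the fiber of the parameter map Ψ over the point Ψ(I_d, ..., I_d) (i.e., the set of weight tuples (W_1,...,W_L) producing the network x ↦ (x_1^{r^{L−1}},...,x_d^{r^{L−1}})), with r ≥ 2, d ≥ 2, L ≥ 2, is exactly the set of tuples obtainable from (I_d,...,I_d) by the multi-homogeneity action: W_1 = P_1 D_1, W_i = P_i D_i D_{i−1}^{−r} P_{i−1}^T for 1 < i < L, and W_L = D_{L−1}^{−r} P_{L−1}^T, with P_i permutation matrices and D_i invertible diagonal matrices. -/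
open Matrix
namespace PNN10
variable {d : ℕ}

lemma permDiag_apply (τ : Equiv.Perm (Fin d)) (c : Fin d → ℂ) (i j : Fin d) :
    (Equiv.Perm.permMatrix ℂ τ * Matrix.diagonal c) i j = if τ i = j then c j else 0 := by
  rw [Matrix.mul_diagonal]
  simp [Equiv.Perm.permMatrix, PEquiv.toMatrix_apply, Equiv.toPEquiv_apply]

lemma perm_transpose (τ : Equiv.Perm (Fin d)) :
    (Equiv.Perm.permMatrix ℂ τ)ᵀ = Equiv.Perm.permMatrix ℂ τ⁻¹ := by
  rw [Equiv.Perm.permMatrix, ← PEquiv.toMatrix_symm, ← Equiv.toPEquiv_symm]; rfl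

lemma perm_mul_perm (τ μ : Equiv.Perm (Fin d)) :
    Equiv.Perm.permMatrix ℂ τ * Equiv.Perm.permMatrix ℂ μ = Equiv.Perm.permMatrix ℂ (μ * τ) := by
  rw [Equiv.Perm.permMatrix, Equiv.Perm.permMatrix, ← PEquiv.toMatrix_trans, ← Equiv.toPEquiv_trans]
  rfl

lemma perm_one : Equiv.Perm.permMatrix ℂ (1 : Equiv.Perm (Fin d)) = 1 := by
  rw [Equiv.Perm.permMatrix,
    show (1 : Equiv.Perm (Fin d)) = Equiv.refl (Fin d) from rfl, Equiv.toPEquiv_refl,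
    PEquiv.toMatrix_refl]

lemma diag_one' : Matrix.diagonal (fun _ : Fin d => (1:ℂ)) = 1 := Matrix.diagonal_one

lemma permDiag_mul_inv (τ : Equiv.Perm (Fin d)) (e : Fin d → ℂ) (he : ∀ j, e j ≠ 0) :
    (Equiv.Perm.permMatrix ℂ τ * Matrix.diagonal e) *
      (Matrix.diagonal (fun j => (e j)⁻¹) * (Equiv.Perm.permMatrix ℂ τ)ᵀ) = 1 := by
  rw [perm_transpose, mul_assoc, ← mul_assoc (Matrix.diagonal e), Matrix.diagonal_mul_diagonal]
  have : (fun j => e j * (e j)⁻¹) = fun _ : Fin d => (1:ℂ) := by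
    funext j; exact mul_inv_cancel₀ (he j)
  rw [this, diag_one', one_mul, perm_mul_perm, inv_mul_cancel, perm_one]

lemma permDiag_inv_mul (τ : Equiv.Perm (Fin d)) (e : Fin d → ℂ) (he : ∀ j, e j ≠ 0) :
    (Matrix.diagonal (fun j => (e j)⁻¹) * (Equiv.Perm.permMatrix ℂ τ)ᵀ) *
      (Equiv.Perm.permMatrix ℂ τ * Matrix.diagonal e) = 1 := by
  rw [perm_transpose, mul_assoc, ← mul_assoc (Equiv.Perm.permMatrix ℂ τ⁻¹), perm_mul_perm,
    mul_inv_cancel, perm_one, one_mul, Matrix.diagonal_mul_diagonal]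
  have : (fun j => (e j)⁻¹ * e j) = fun _ : Fin d => (1:ℂ) := by
    funext j; exact inv_mul_cancel₀ (he j)
  rw [this, diag_one']

lemma linear_diag {R : ℕ} (hR : 1 ≤ R) (T : Matrix (Fin d) (Fin d) ℂ)
    (h : ∀ x : Fin d → ℂ, ∀ i, (T *ᵥ x) i ^ R = x i ^ R) :
    ∀ i j, i ≠ j → T i j = 0 := by
  intro i j hij
  by_contra hT
  have key := h ((Pi.single i (1:ℂ) : Fin d → ℂ) + (-T i i / T i j) • (Pi.single j (1:ℂ) : Fin d → ℂ)) i
  rw [Matrix.mulVec_add, Matrix.mulVec_smul, Matrix.mulVec_single_one, Matrix.mulVec_single_one] at key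
  simp only [Pi.add_apply, Pi.smul_apply, smul_eq_mul, mul_one, Pi.single_apply, Matrix.col_apply] at key
  rw [if_pos trivial, if_neg hij, div_mul_cancel₀ _ hT] at key
  simp only [mul_zero, add_zero, neg_add_cancel] at key
  rw [add_neg_cancel, zero_pow (by omega), one_pow] at key
  exact zero_ne_one key


lemma pnn_one (r : ℕ) (W : ℕ → Matrix (Fin d) (Fin d) ℂ) (x : Fin d → ℂ) :
    pnn (R := ℂ) r (fun _ => d) W 1 x = (W 0) *ᵥ x := rfl

lemma pnn_add_two (r L : ℕ) (W : ℕ → Matrix (Fin d) (Fin d) ℂ) (x : Fin d → ℂ) :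
    pnn (R := ℂ) r (fun _ => d) W (L+2) x
      = (W (L+1)) *ᵥ (fun i => (pnn (R := ℂ) r (fun _ => d) W (L+1) x) i ^ r) := rfl

lemma pnn_congr (r : ℕ) (W : ℕ → Matrix (Fin d) (Fin d) ℂ) {x x' : Fin d → ℂ}
    (h : (fun i => ((W 0) *ᵥ x) i ^ r) = (fun i => ((W 0) *ᵥ x') i ^ r)) :
    ∀ k, pnn (R := ℂ) r (fun _ => d) W (k+2) x = pnn (R := ℂ) r (fun _ => d) W (k+2) x' := by
  intro k
  induction k with
  | zero => rw [pnn_add_two, pnn_add_two, pnn_one, pnn_one, h]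
  | succ n ih =>
    rw [pnn_add_two r (n+1) W x, pnn_add_two r (n+1) W x', ih]

lemma pnn_shift (r : ℕ) (W W' : ℕ → Matrix (Fin d) (Fin d) ℂ) (M : Matrix (Fin d) (Fin d) ℂ)
    (hW' : ∀ i, W' (i+1) = W (i+2))
    (hM : ∀ x : Fin d → ℂ, (fun i => ((W 0) *ᵥ x) i ^ r) = M *ᵥ (fun i => x i ^ r))
    (h0 : W' 0 = W 1 * M) :
    ∀ k (x : Fin d → ℂ), pnn (R := ℂ) r (fun _ => d) W (k+2) x
      = pnn (R := ℂ) r (fun _ => d) W' (k+1) (fun i => x i ^ r) := by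
  intro k
  induction k with
  | zero =>
    intro x
    rw [pnn_add_two, pnn_one, pnn_one, hM, Matrix.mulVec_mulVec, ← h0]
  | succ n ih =>
    intro x
    rw [pnn_add_two r (n+1) W x, pnn_add_two r n W' (fun i => x i ^ r), ih x, hW']


lemma monomial_structure (r : ℕ) (hr : 2 ≤ r) (A : Matrix (Fin d) (Fin d) ℂ)
    (hA : IsUnit A)
    (h : ∀ ε : Fin d → ℂ, (∀ i, ε i ^ r = 1) → ∀ i j, i ≠ j →
      (A⁻¹ * (Matrix.diagonal ε * A)) i j = 0) :
    ∃ (τ : Equiv.Perm (Fin d)) (c : Fin d → ℂ), (∀ j, c j ≠ 0) ∧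
      A = Equiv.Perm.permMatrix ℂ τ * Matrix.diagonal c := by
  have hdet : IsUnit A.det := (Matrix.isUnit_iff_isUnit_det A).mp hA
  have hAinv : A * A⁻¹ = 1 := Matrix.mul_nonsing_inv A hdet
  have hinj : Function.Injective A.mulVec := Matrix.mulVec_injective_iff_isUnit.mpr hA
  -- a nontrivial r-th root of unity
  obtain ⟨ζ, hζr, hζ1⟩ : ∃ ζ : ℂ, ζ ^ r = 1 ∧ ζ ≠ 1 := by
    have hprim := Complex.isPrimitiveRoot_exp r (by omega)
    exact ⟨_, hprim.pow_eq_one, hprim.ne_one (by omega)⟩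
  -- each column has at most one nonzero entry
  have colsupp : ∀ j i i', A i j ≠ 0 → A i' j ≠ 0 → i = i' := by
    intro j i i' hi hi'
    by_contra hne
    set ε : Fin d → ℂ := fun k => if k = i then ζ else 1 with hε
    have hεr : ∀ k, ε k ^ r = 1 := by
      intro k; by_cases hk : k = i <;> simp [hε, hk, hζr]
    set T := A⁻¹ * (Matrix.diagonal ε * A) with hT
    have hTd : T = Matrix.diagonal (fun k => T k k) := by
      ext a b
      by_cases hab : a = b
      · subst hab; simp [Matrix.diagonal_apply_eq]
      · rw [Matrix.diagonal_apply_ne _ hab]; exact h ε hεr a b hab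
    have hAT : Matrix.diagonal ε * A = A * T := by
      rw [hT, ← mul_assoc, hAinv, one_mul]
    have key : ∀ a b, ε a * A a b = A a b * T b b := by
      intro a b
      have h1 := congrFun (congrFun hAT a) b
      rw [Matrix.diagonal_mul] at h1
      conv_rhs at h1 => rw [hTd, Matrix.mul_diagonal]
      exact h1
    have e1 : T j j = ζ := by
      have hkey := key i j
      rw [hε] at hkey; simp only [if_pos rfl] at hkey
      rw [mul_comm (A i j) (T j j)] at hkey
      exact (mul_right_cancel₀ hi hkey).symm
    have e2 : T j j = 1 := by
      have hkey := key i' j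
      rw [hε] at hkey
      have hne' : i' ≠ i := fun hh => hne hh.symm
      simp only [if_neg hne', one_mul] at hkey
      have hkey2 : A i' j * (1:ℂ) = A i' j * T j j := by rw [mul_one]; exact hkey
      exact (mul_left_cancel₀ hi' hkey2).symm
    exact hζ1 (e1.symm.trans e2)
  -- each column has a nonzero entry
  have colnz : ∀ j, ∃ i, A i j ≠ 0 := by
    intro j
    by_contra hc
    push_neg at hc
    have hcol : A *ᵥ (Pi.single j (1:ℂ) : Fin d → ℂ) = A *ᵥ (0 : Fin d → ℂ) := by
      rw [Matrix.mulVec_zero, Matrix.mulVec_single]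
      funext i; simp [hc i]
    have := hinj hcol
    have := congrFun this j
    simp at this
  classical
  choose f hf using colnz
  have hfinj : Function.Injective f := by
    intro j j' hjj'
    by_contra hne
    set v : Fin d → ℂ := A (f j) j' • (Pi.single j (1:ℂ) : Fin d → ℂ)
      - A (f j) j • (Pi.single j' (1:ℂ) : Fin d → ℂ) with hv
    have hAv : A *ᵥ v = A *ᵥ (0 : Fin d → ℂ) := by
      rw [Matrix.mulVec_zero, hv, Matrix.mulVec_sub, Matrix.mulVec_smul, Matrix.mulVec_smul,
        Matrix.mulVec_single_one, Matrix.mulVec_single_one]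
      funext i
      simp only [Pi.sub_apply, Pi.smul_apply, smul_eq_mul, mul_one, Pi.zero_apply, Matrix.col_apply]
      by_cases hi : i = f j
      · subst hi; ring
      · have h1 : A i j = 0 := by
          by_contra h'; exact hi (colsupp j i (f j) h' (hf j))
        have h2 : A i j' = 0 := by
          by_contra h'
          exact hi ((colsupp j' i (f j') h' (hf j')).trans hjj'.symm)
        rw [h1, h2]; ring
    have hv0 := hinj hAv
    have := congrFun hv0 j
    simp only [hv, Pi.sub_apply, Pi.smul_apply, smul_eq_mul, Pi.zero_apply,
      Pi.single_apply] at this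
    rw [if_pos trivial, if_neg hne] at this
    simp only [mul_one, mul_zero, sub_zero] at this
    have : A (f j) j' = 0 := this
    have h3 : A (f j') j' ≠ 0 := hf j'
    rw [← hjj'] at h3
    exact h3 this
  have hfbij : Function.Bijective f := (Finite.injective_iff_bijective).mp hfinj
  set e := Equiv.ofBijective f hfbij with he
  refine ⟨e.symm, fun j => A (f j) j, fun j => hf j, ?_⟩
  have hef : ∀ j, e j = f j := fun j => Equiv.ofBijective_apply f hfbij j
  ext i j
  rw [permDiag_apply]
  by_cases hij : i = f j
  · subst hij
    have hcond : e.symm (f j) = j := by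
      rw [← hef j, Equiv.symm_apply_apply]
    rw [if_pos hcond]
  · have hcond : ¬ (e.symm i = j) := by
      intro hh
      apply hij
      have : e (e.symm i) = e j := by rw [hh]
      rw [Equiv.apply_symm_apply, hef] at this
      exact this
    rw [if_neg hcond]
    by_contra h'
    exact hij (colsupp j i (f j) h' (hf j))


lemma permDiag_mulVec (τ : Equiv.Perm (Fin d)) (c : Fin d → ℂ) (x : Fin d → ℂ) (i : Fin d) :
    ((Equiv.Perm.permMatrix ℂ τ * Matrix.diagonal c) *ᵥ x) i = c (τ i) * x (τ i) := by
  simp [Matrix.mulVec, dotProduct, permDiag_apply, ite_mul, Equiv.toPEquiv_apply,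
    Finset.sum_ite_eq]

lemma permDiag_pow (r : ℕ) (τ : Equiv.Perm (Fin d)) (c : Fin d → ℂ) (x : Fin d → ℂ) :
    (fun i => ((Equiv.Perm.permMatrix ℂ τ * Matrix.diagonal c) *ᵥ x) i ^ r)
      = (Equiv.Perm.permMatrix ℂ τ * Matrix.diagonal (fun j => c j ^ r)) *ᵥ (fun i => x i ^ r) := by
  funext i
  rw [permDiag_mulVec, permDiag_mulVec, mul_pow]

noncomputable def orbitMat (r : ℕ) (τ : ℕ → Equiv.Perm (Fin d)) (c : ℕ → Fin d → ℂ) (i : ℕ) :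
    Matrix (Fin d) (Fin d) ℂ :=
  Equiv.Perm.permMatrix ℂ (τ (i+1)) * Matrix.diagonal (c (i+1)) *
    Matrix.diagonal (fun j => (c i j ^ r)⁻¹) * (Equiv.Perm.permMatrix ℂ (τ i)).transpose

theorem auxRev (r : ℕ) (hr : 2 ≤ r) :
    ∀ L, 1 ≤ L → ∀ (W : ℕ → Matrix (Fin d) (Fin d) ℂ)
      (τ : ℕ → Equiv.Perm (Fin d)) (c : ℕ → Fin d → ℂ),
    (∀ i j, c i j ≠ 0) → τ 0 = 1 → τ L = 1 → c 0 = (fun _ => 1) → c L = (fun _ => 1) →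
    (∀ i < L, W i = orbitMat r τ c i) →
    ∀ x : Fin d → ℂ, pnn (R := ℂ) r (fun _ => d) W L x = fun i => x i ^ r ^ (L-1) := by
  intro L hL
  induction L, hL using Nat.le_induction with
  | base =>
    intro W τ c hc hτ0 hτL hc0 hcL hform x
    have h0 := hform 0 (by omega)
    rw [orbitMat, hτ0, hτL, hc0, hcL] at h0
    simp only [one_pow, inv_one, perm_one, Matrix.transpose_one, mul_one,
      Matrix.diagonal_one, one_mul] at h0
    rw [pnn_one, h0, Matrix.one_mulVec]
    funext i
    simp
  | succ L hL ih =>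
    intro W τ c hc hτ0 hτL hc0 hcL hform
    obtain ⟨m, rfl⟩ : ∃ m, L = m + 1 := ⟨L - 1, (Nat.succ_pred_eq_of_pos hL).symm⟩
    have hW0 : W 0 = Equiv.Perm.permMatrix ℂ (τ 1) * Matrix.diagonal (c 1) := by
      have h0 := hform 0 (by omega)
      rw [orbitMat, hτ0, hc0] at h0
      simp only [one_pow, inv_one, perm_one, Matrix.transpose_one, mul_one] at h0
      rw [diag_one', mul_one] at h0
      exact h0
    set W' : ℕ → Matrix (Fin d) (Fin d) ℂ := fun k => match k with
      | 0 => W 1 * (Equiv.Perm.permMatrix ℂ (τ 1) * Matrix.diagonal (fun j => c 1 j ^ r))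
      | (n+1) => W (n+2) with hW'def
    set τ' : ℕ → Equiv.Perm (Fin d) := fun k => match k with
      | 0 => 1
      | (n+1) => τ (n+2) with hτ'def
    set c' : ℕ → Fin d → ℂ := fun k => match k with
      | 0 => fun _ => 1
      | (n+1) => c (n+2) with hc'def
    have hc' : ∀ i j, c' i j ≠ 0 := by
      intro i j
      match i with
      | 0 => exact one_ne_zero
      | (n+1) => exact hc (n+2) j
    have hform' : ∀ i < m + 1, W' i = orbitMat r τ' c' i := by
      intro i hi
      match i with
      | 0 =>
        have h1 := hform 1 (by omega)
        have hinv : (Matrix.diagonal (fun j => (c 1 j ^ r)⁻¹) * (Equiv.Perm.permMatrix ℂ (τ 1))ᵀ)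
            * (Equiv.Perm.permMatrix ℂ (τ 1) * Matrix.diagonal (fun j => c 1 j ^ r)) = 1 :=
          permDiag_inv_mul (τ 1) (fun j => c 1 j ^ r) (fun j => pow_ne_zero r (hc 1 j))
        show W 1 * _ = _
        rw [h1, orbitMat, orbitMat]
        simp only [mul_assoc] at hinv ⊢
        rw [hinv, mul_one]
        show _ = Equiv.Perm.permMatrix ℂ (τ 2) *
          (Matrix.diagonal (c 2) * (Matrix.diagonal (fun j => ((1:ℂ) ^ r)⁻¹) *
            (Equiv.Perm.permMatrix ℂ (1 : Equiv.Perm (Fin d)))ᵀ))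
        simp only [one_pow, inv_one, perm_one, Matrix.transpose_one]
        rw [diag_one', one_mul, mul_one]
      | (n+1) =>
        have h2 := hform (n+2) (by omega)
        show W (n+2) = _
        rw [h2]
        rfl
    have htel := pnn_shift r W W'
      (Equiv.Perm.permMatrix ℂ (τ 1) * Matrix.diagonal (fun j => c 1 j ^ r))
      (fun i => rfl)
      (by intro x; rw [hW0]; exact permDiag_pow r (τ 1) (c 1) x)
      rfl
    intro x
    have := htel m x
    rw [this, ih W' τ' c' hc' rfl hτL rfl hcL hform' (fun i => x i ^ r)]
    funext i
    simp only [Nat.add_sub_cancel]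
    rw [← pow_mul, ← pow_succ']


theorem auxFwd (r : ℕ) (hr : 2 ≤ r) :
    ∀ L, 1 ≤ L → ∀ W : ℕ → Matrix (Fin d) (Fin d) ℂ,
    (∀ x : Fin d → ℂ, pnn (R := ℂ) r (fun _ => d) W L x = fun i => x i ^ r ^ (L-1)) →
    ∃ (τ : ℕ → Equiv.Perm (Fin d)) (c : ℕ → Fin d → ℂ),
      (∀ i j, c i j ≠ 0) ∧ τ 0 = 1 ∧ τ L = 1 ∧ c 0 = (fun _ => 1) ∧ c L = (fun _ => 1) ∧
      ∀ i < L, W i = orbitMat r τ c i := by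
  intro L hL
  induction L, hL using Nat.le_induction with
  | base =>
    intro W hfib
    have hW0 : W 0 = 1 := by
      ext i j
      have hthis := congrFun (hfib (Pi.single j (1:ℂ))) i
      rw [pnn_one, Matrix.mulVec_single_one] at hthis
      simp only [Nat.sub_self, pow_zero, pow_one, mul_one, Matrix.col_apply] at hthis
      rw [hthis, Pi.single_apply, Matrix.one_apply]
    refine ⟨fun _ => 1, fun _ _ => 1, fun _ _ => one_ne_zero, rfl, rfl, rfl, rfl, ?_⟩
    intro i hi
    interval_cases i
    rw [hW0, orbitMat]
    simp only [one_pow, inv_one, perm_one, Matrix.transpose_one, Matrix.diagonal_one,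
      mul_one, one_mul]
  | succ L hL ih =>
    intro W hfib0
    obtain ⟨m, rfl⟩ : ∃ m, L = m + 1 := ⟨L - 1, (Nat.succ_pred_eq_of_pos hL).symm⟩
    have hfib : ∀ x : Fin d → ℂ,
        pnn (R := ℂ) r (fun _ => d) W (m+2) x = fun i => x i ^ r ^ (m+1) := by
      intro x
      have := hfib0 x
      simpa using this
    have hRpos : 0 < r ^ (m+1) := pow_pos (by omega) _
    have hker : ∀ v : Fin d → ℂ, W 0 *ᵥ v = 0 → v = 0 := by
      intro v hv
      have heq : (fun i => ((W 0) *ᵥ v) i ^ r) = (fun i => ((W 0) *ᵥ (0 : Fin d → ℂ)) i ^ r) := by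
        rw [hv, Matrix.mulVec_zero]
      have hp := pnn_congr r W heq m
      rw [hfib v, hfib (0 : Fin d → ℂ)] at hp
      funext i
      have hpi := congrFun hp i
      simp only [Pi.zero_apply, zero_pow hRpos.ne'] at hpi ⊢
      exact pow_eq_zero_iff hRpos.ne' |>.mp hpi
    have hinj : Function.Injective (W 0).mulVec := by
      intro a b hab
      have h1 : W 0 *ᵥ (a - b) = 0 := by rw [Matrix.mulVec_sub, hab, sub_self]
      exact sub_eq_zero.mp (hker _ h1)
    have hU : IsUnit (W 0) := Matrix.mulVec_injective_iff_isUnit.mp hinj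
    have hdet : IsUnit (W 0).det := (Matrix.isUnit_iff_isUnit_det _).mp hU
    have hAinv : W 0 * (W 0)⁻¹ = 1 := Matrix.mul_nonsing_inv _ hdet
    have hconj : ∀ ε : Fin d → ℂ, (∀ i, ε i ^ r = 1) → ∀ i j, i ≠ j →
        ((W 0)⁻¹ * (Matrix.diagonal ε * W 0)) i j = 0 := by
      intro ε hε
      apply linear_diag (R := r ^ (m+1)) hRpos ((W 0)⁻¹ * (Matrix.diagonal ε * W 0))
      intro x i
      set T := (W 0)⁻¹ * (Matrix.diagonal ε * W 0) with hT
      have hWT : W 0 *ᵥ (T *ᵥ x) = (Matrix.diagonal ε * W 0) *ᵥ x := by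
        rw [Matrix.mulVec_mulVec, hT, ← mul_assoc, hAinv, one_mul]
      have hpow : (fun k => ((W 0) *ᵥ (T *ᵥ x)) k ^ r) = (fun k => ((W 0) *ᵥ x) k ^ r) := by
        funext k
        rw [hWT, ← Matrix.mulVec_mulVec, Matrix.mulVec_diagonal, mul_pow, hε k, one_mul]
      have hp := pnn_congr r W hpow m
      rw [hfib (T *ᵥ x), hfib x] at hp
      exact congrFun hp i
    obtain ⟨τ₁, c₁, hc₁, hW0⟩ := monomial_structure r hr (W 0) hU hconj
    set W' : ℕ → Matrix (Fin d) (Fin d) ℂ := fun k => match k with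
      | 0 => W 1 * (Equiv.Perm.permMatrix ℂ τ₁ * Matrix.diagonal (fun j => c₁ j ^ r))
      | (n+1) => W (n+2) with hW'def
    have htel := pnn_shift r W W'
      (Equiv.Perm.permMatrix ℂ τ₁ * Matrix.diagonal (fun j => c₁ j ^ r))
      (fun i => rfl)
      (by intro x; rw [hW0]; exact permDiag_pow r τ₁ c₁ x)
      rfl
    have hfib' : ∀ y : Fin d → ℂ,
        pnn (R := ℂ) r (fun _ => d) W' (m+1) y = fun i => y i ^ r ^ ((m+1) - 1) := by
      intro y
      have hex : ∀ i, ∃ z : ℂ, z ^ r = y i :=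
        fun i => IsAlgClosed.exists_pow_nat_eq (y i) (by omega)
      choose x hx using hex
      have hxy : (fun i => x i ^ r) = y := funext hx
      rw [← hxy, ← htel m x, hfib x]
      funext i
      simp only [Nat.add_sub_cancel]
      rw [← pow_mul, ← pow_succ']
    obtain ⟨τ', c', hc', hτ'0, hτ'L, hc'0, hc'L, hform'⟩ := ih W' hfib'
    refine ⟨(fun k => match k with | 0 => 1 | 1 => τ₁ | (n+2) => τ' (n+1)),
            (fun k => match k with | 0 => (fun _ => 1) | 1 => c₁ | (n+2) => c' (n+1)),
            ?_, rfl, ?_, rfl, ?_, ?_⟩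
    · intro i j
      match i with
      | 0 => exact one_ne_zero
      | 1 => exact hc₁ j
      | (n+2) => exact hc' (n+1) j
    · show τ' (m+1) = 1
      exact hτ'L
    · show c' (m+1) = fun _ => 1
      exact hc'L
    · intro i hi
      match i, hi with
      | 0, _ =>
        rw [orbitMat]
        show W 0 = Equiv.Perm.permMatrix ℂ τ₁ * Matrix.diagonal c₁ *
          Matrix.diagonal (fun j => ((1:ℂ) ^ r)⁻¹) *
          (Equiv.Perm.permMatrix ℂ (1 : Equiv.Perm (Fin d)))ᵀ
        simp only [one_pow, inv_one, perm_one, Matrix.transpose_one, Matrix.diagonal_one,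
          mul_one]
        exact hW0
      | 1, _ =>
        have h0' := hform' 0 (by omega)
        rw [orbitMat, hτ'0, hc'0] at h0'
        simp only [one_pow, inv_one, Matrix.diagonal_one, perm_one, Matrix.transpose_one,
          mul_one] at h0'
        have hiv : (Equiv.Perm.permMatrix ℂ τ₁ * Matrix.diagonal (fun j => c₁ j ^ r)) *
            (Matrix.diagonal (fun j => (c₁ j ^ r)⁻¹) * (Equiv.Perm.permMatrix ℂ τ₁)ᵀ) = 1 :=
          permDiag_mul_inv τ₁ _ (fun j => pow_ne_zero r (hc₁ j))
        have hw1 : W 1 = W' 0 *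
            (Matrix.diagonal (fun j => (c₁ j ^ r)⁻¹) * (Equiv.Perm.permMatrix ℂ τ₁)ᵀ) := by
          show W 1 = (W 1 * (Equiv.Perm.permMatrix ℂ τ₁ * Matrix.diagonal (fun j => c₁ j ^ r))) * _
          rw [mul_assoc, hiv, mul_one]
        rw [hw1, h0', orbitMat]
        show Equiv.Perm.permMatrix ℂ (τ' 1) * Matrix.diagonal (c' 1) *
            (Matrix.diagonal (fun j => (c₁ j ^ r)⁻¹) * (Equiv.Perm.permMatrix ℂ τ₁)ᵀ)
          = Equiv.Perm.permMatrix ℂ (τ' 1) * Matrix.diagonal (c' 1) *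
            Matrix.diagonal (fun j => (c₁ j ^ r)⁻¹) * (Equiv.Perm.permMatrix ℂ τ₁)ᵀ
        simp only [mul_assoc]
      | (n+2), hi =>
        have h2' := hform' (n+1) (by omega)
        show W (n+2) = _
        rw [show W (n+2) = W' (n+1) from rfl, h2', orbitMat, orbitMat]

end PNN10

/-- For the equi-width architecture (d,...,d) with L layers, d ≥ 2,
L ≥ 2, r ≥ 2, the fiber of the parameter map over Ψ(I,...,I), i.e. over the network
x ↦ (x_1^{r^{L−1}},...,x_d^{r^{L−1}}), is exactly the multi-homogeneity orbit of
(I,...,I): W_1 = P_1 D_1, W_i = P_i D_i D_{i−1}^{−r} P_{i−1}ᵀ for 1 < i < L, and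
W_L = D_{L−1}^{−r} P_{L−1}ᵀ. (Weights are 0-indexed: `W k` is W_{k+1}.) -/
theorem equiwidth_fiber_is_multihomogeneity_orbit
    (d L r : ℕ) (hd : 2 ≤ d) (hL : 2 ≤ L) (hr : 2 ≤ r)
    (W : ℕ → Matrix (Fin d) (Fin d) ℂ) :
    (∀ x : Fin d → ℂ,
        pnn (R := ℂ) r (fun _ => d) W L x = fun i => (x i) ^ (r ^ (L - 1))) ↔
      ∃ (τ : ℕ → Equiv.Perm (Fin d)) (c : ℕ → Fin d → ℂ),
        (∀ i j, c i j ≠ 0) ∧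
        W 0 = Equiv.Perm.permMatrix ℂ (τ 1) * Matrix.diagonal (c 1) ∧
        (∀ i, 0 < i → i < L - 1 →
          W i = Equiv.Perm.permMatrix ℂ (τ (i+1)) * Matrix.diagonal (c (i+1)) *
            Matrix.diagonal (fun j => (c i j ^ r)⁻¹) *
            (Equiv.Perm.permMatrix ℂ (τ i)).transpose) ∧
        W (L-1) = Matrix.diagonal (fun j => (c (L-1) j ^ r)⁻¹) *
          (Equiv.Perm.permMatrix ℂ (τ (L-1))).transpose := by
  obtain ⟨m, rfl⟩ : ∃ m, L = m + 2 := ⟨L - 2, by omega⟩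
  have hsub : m + 2 - 1 = m + 1 := rfl
  constructor
  · intro hfib
    obtain ⟨τ, c, hc, hτ0, hτL, hc0, hcL, hform⟩ :=
      PNN10.auxFwd r hr (m+2) (by omega) W hfib
    refine ⟨τ, c, hc, ?_, ?_, ?_⟩
    · have h0 := hform 0 (by omega)
      rw [PNN10.orbitMat, hτ0, hc0] at h0
      simp only [one_pow, inv_one, PNN10.perm_one, Matrix.transpose_one, Matrix.diagonal_one,
        mul_one] at h0
      exact h0
    · intro i hi0 hiL
      have h := hform i (by omega)
      rw [PNN10.orbitMat] at h
      exact h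
    · have h1 := hform (m+1) (by omega)
      rw [PNN10.orbitMat, hτL, hcL] at h1
      simp only [PNN10.perm_one, Matrix.diagonal_one, one_mul] at h1
      rw [hsub]
      exact h1
  · rintro ⟨τ, c, hc, h1, h2, h3⟩
    rw [hsub] at h3
    set τh : ℕ → Equiv.Perm (Fin d) := fun k => if k = 0 ∨ m + 2 ≤ k then 1 else τ k with hτh
    set ch : ℕ → Fin d → ℂ := fun k => if k = 0 ∨ m + 2 ≤ k then (fun _ => 1) else c k with hch
    have hτh_eq : ∀ k, 0 < k → k < m + 2 → τh k = τ k := by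
      intro k hk1 hk2; rw [hτh]; dsimp only; rw [if_neg (by omega)]
    have hch_eq : ∀ k, 0 < k → k < m + 2 → ch k = c k := by
      intro k hk1 hk2; rw [hch]; dsimp only; rw [if_neg (by omega)]
    have hτh0 : τh 0 = 1 := by rw [hτh]; dsimp only; rw [if_pos (by omega)]
    have hτhL : τh (m+2) = 1 := by rw [hτh]; dsimp only; rw [if_pos (by omega)]
    have hch0 : ch 0 = fun _ => 1 := by rw [hch]; dsimp only; rw [if_pos (by omega)]
    have hchL : ch (m+2) = fun _ => 1 := by rw [hch]; dsimp only; rw [if_pos (by omega)]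
    apply PNN10.auxRev r hr (m+2) (by omega) W τh ch ?_ hτh0 hτhL hch0 hchL
    · intro i hi
      rw [PNN10.orbitMat]
      rcases eq_or_ne i 0 with rfl | hi0
      · rw [hτh_eq 1 (by omega) (by omega), hch_eq 1 (by omega) (by omega), hch0, hτh0]
        simp only [one_pow, inv_one, PNN10.perm_one, Matrix.transpose_one, Matrix.diagonal_one,
          mul_one]
        exact h1
      rcases eq_or_ne i (m+1) with rfl | him
      · rw [hτhL, hchL, hch_eq (m+1) (by omega) (by omega), hτh_eq (m+1) (by omega) (by omega)]
        simp only [PNN10.perm_one, Matrix.diagonal_one, one_mul]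
        exact h3
      · rw [hτh_eq (i+1) (by omega) (by omega), hch_eq (i+1) (by omega) (by omega),
          hch_eq i (by omega) (by omega), hτh_eq i (by omega) (by omega)]
        exact h2 i (by omega) (by omega)
    · intro i j
      rw [hch]; dsimp only
      split
      · exact one_ne_zero
      · exact hc i j
end
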